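/- Restriction of functions gives an algebra isomorphism C[R_n]^{G_n} ≅ C[L_n]^{W_n}, where R_n = (gl_n(C))^m is the representation space of the cyclic quiver with dimension vector nδ, G_n = GL_n(C)^m acts by base change, L_n is the diagonal locus, and W_n = S_n ⋉ (Z/mZ)^n. (Chevalley restriction theorem for the cyclic quiver.) -/

import Mathlib

set_option linter.unusedSectionVars false
set_option linter.unusedVariables false


open MvPolynomial

/-- Evaluation of a polynomial function on `R_n = (gl_n ℂ)^m` at a tuple of matrices. -/
noncomputable def evalRep (m n : ℕ) (f : MvPolynomial (Fin m × Fin n × Fin n) ℂ)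
    (x : Fin m → Matrix (Fin n) (Fin n) ℂ) : ℂ :=
  eval (fun p => x p.1 p.2.1 p.2.2) f

/-- `G_n = GL_n(ℂ)^m`-invariance of a polynomial function on `R_n`,
for the cyclic base-change action `(g·x) i = (g (i+1))⁻¹ * x i * g i` (indices mod `m`). -/
def GInvRep (m n : ℕ) [NeZero m] (f : MvPolynomial (Fin m × Fin n × Fin n) ℂ) : Prop :=
  ∀ (g : Fin m → (Matrix (Fin n) (Fin n) ℂ)ˣ) (x : Fin m → Matrix (Fin n) (Fin n) ℂ),
    evalRep m n f (fun i => (g (i + 1))⁻¹.val * x i * (g i).val) = evalRep m n f x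

/-- `W_n = S_n ⋉ (ℤ/mℤ)^n`-invariance of a polynomial function on `ℂ^n ≅ L_n`. -/
def WInvDiag (m n : ℕ) (q : MvPolynomial (Fin n) ℂ) : Prop :=
  ∀ (σ : Equiv.Perm (Fin n)) (a : Fin n → ℂ), (∀ i, a i ^ m = 1) →
    ∀ z : Fin n → ℂ, eval (fun i => a i * z (σ⁻¹ i)) q = eval z q


-- ## Infrastructure

lemma eval_bind {σ τ : Type*} (x : τ → ℂ) (g : σ → MvPolynomial τ ℂ) (p : MvPolynomial σ ℂ) :
    eval x (bind₁ g p) = eval (fun i => eval x (g i)) p := by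
  induction p using MvPolynomial.induction_on with
  | C c => simp
  | add p q hp hq => rw [map_add, map_add, hp, hq, map_add]
  | mul_X p i hp => rw [map_mul, map_mul, bind₁_X_right, hp, map_mul, eval_X]

lemma eval_eq_zero_of_eval_mul {σ : Type*} (p h : MvPolynomial σ ℂ)
    (hvan : ∀ x : σ → ℂ, eval x h ≠ 0 → eval x p = 0)
    (x₀ : σ → ℂ) (hx₀ : eval x₀ h ≠ 0) : p = 0 := by
  have hmul : p * h = 0 := by
    apply MvPolynomial.funext
    intro x
    rcases eq_or_ne (eval x h) 0 with h0 | h0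
    · simp [h0]
    · simp [hvan x h0, h0]
  rcases mul_eq_zero.mp hmul with h1 | h1
  · exact h1
  · exact absurd (by rw [h1]; simp : eval x₀ h = 0) hx₀

lemma charpoly_units_conj {n : ℕ} (u : (Matrix (Fin n) (Fin n) ℂ)ˣ)
    (A : Matrix (Fin n) (Fin n) ℂ) :
    ((u : Matrix (Fin n) (Fin n) ℂ) * A * (↑u⁻¹ : Matrix (Fin n) (Fin n) ℂ)).charpoly
      = A.charpoly := by
  set φ : Matrix (Fin n) (Fin n) ℂ →+* Matrix (Fin n) (Fin n) (Polynomial ℂ) :=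
    (Polynomial.C : ℂ →+* Polynomial ℂ).mapMatrix with hφ
  have huu : φ (u : Matrix (Fin n) (Fin n) ℂ) * φ (↑u⁻¹ : Matrix (Fin n) (Fin n) ℂ) = 1 := by
    rw [← map_mul, Units.mul_inv, map_one]
  have h1 : ((u : Matrix (Fin n) (Fin n) ℂ) * A * (↑u⁻¹ : Matrix (Fin n) (Fin n) ℂ)).charmatrix
      = φ (u : Matrix (Fin n) (Fin n) ℂ) * A.charmatrix *
        φ (↑u⁻¹ : Matrix (Fin n) (Fin n) ℂ) := by
    rw [Matrix.charmatrix, Matrix.charmatrix, mul_sub, sub_mul]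
    congr 1
    · have hc : (Matrix.scalar (Fin n)) Polynomial.X * φ (↑u⁻¹ : Matrix (Fin n) (Fin n) ℂ)
          = φ (↑u⁻¹ : Matrix (Fin n) (Fin n) ℂ) * (Matrix.scalar (Fin n)) Polynomial.X :=
        (Matrix.scalar_commute Polynomial.X (fun r => Commute.all _ _) _).eq
      rw [mul_assoc, hc, ← mul_assoc, huu, one_mul]
    · have : (φ ((u : Matrix (Fin n) (Fin n) ℂ) * A * (↑u⁻¹ : Matrix (Fin n) (Fin n) ℂ)))
          = φ (u : Matrix (Fin n) (Fin n) ℂ) * φ A * φ (↑u⁻¹ : Matrix (Fin n) (Fin n) ℂ) := by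
        rw [map_mul, map_mul]
      exact this
  rw [Matrix.charpoly, Matrix.charpoly, h1, Matrix.det_mul, Matrix.det_mul, mul_right_comm,
    ← Matrix.det_mul, huu, Matrix.det_one, one_mul]

lemma exists_root_label {n : ℕ} (A : Matrix (Fin n) (Fin n) ℂ) :
    ∃ z : Fin n → ℂ, A.charpoly = ∏ i : Fin n, (Polynomial.X - Polynomial.C (z i)) := by
  have hmonic := A.charpoly_monic
  have hdeg : A.charpoly.natDegree = n := by
    rw [Matrix.charpoly_natDegree_eq_dim, Fintype.card_fin]
  have hsplits : A.charpoly.Splits := IsAlgClosed.splits _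
  have hprod := hsplits.eq_prod_roots_of_monic hmonic
  have hcard : Multiset.card A.charpoly.roots = n := by
    rw [Polynomial.splits_iff_card_roots.mp hsplits, hdeg]
  set l := A.charpoly.roots.toList with hl
  have hlen : l.length = n := by rw [hl, Multiset.length_toList, hcard]
  refine ⟨fun i => l.get (Fin.cast hlen.symm i), ?_⟩
  rw [hprod]
  have h1 : A.charpoly.roots = (l : Multiset ℂ) := (A.charpoly.roots.coe_toList).symm
  rw [h1]
  rw [Multiset.map_coe, Multiset.prod_coe]
  conv_lhs => rw [← List.ofFn_get l, List.map_ofFn, List.prod_ofFn]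
  exact Fintype.prod_equiv (finCongr hlen) _ _ (fun i => rfl)

lemma vieta_coeff {n : ℕ} (v : Fin n → ℂ) {k : ℕ} (hk : k ≤ n) :
    (∏ i : Fin n, (Polynomial.X - Polynomial.C (v i))).coeff (n - k) =
      (-1) ^ k * eval v (MvPolynomial.esymm (Fin n) ℂ k) := by
  have h1 : ∏ i : Fin n, (Polynomial.X - Polynomial.C (v i))
      = ((Finset.univ.val.map v).map fun t => Polynomial.X - Polynomial.C t).prod := by
    rw [Finset.prod_eq_multiset_prod, Multiset.map_map]
    rfl
  have hcard : Multiset.card (Finset.univ.val.map v) = n := by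
    simp
  rw [h1, Multiset.prod_X_sub_C_coeff _ (by rw [hcard]; omega), hcard, Nat.sub_sub_self hk]
  congr 1
  have h2 := MvPolynomial.aeval_esymm_eq_multiset_esymm (σ := Fin n) (R := ℂ) k v
  rw [← h2]
  rfl

lemma fin_add_one_val (m : ℕ) [NeZero m] (i : Fin m) :
    ((i + 1 : Fin m) : ℕ) = ((i : ℕ) + 1) % m := by
  rw [Fin.val_add, Fin.val_one', Nat.add_mod_mod]

def pprod {M : Type*} [Monoid M] (m : ℕ) (x : Fin m → M) : ℕ → M
  | 0 => 1
  | (k+1) => (if h : k < m then x ⟨k, h⟩ else 1) * pprod m x k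

def prodX {M : Type*} [Monoid M] (m : ℕ) (x : Fin m → M) : M := pprod m x m

lemma pprod_map {M N : Type*} [Monoid M] [Monoid N] (f : M →* N) (m : ℕ) (x : Fin m → M)
    (k : ℕ) : pprod m (fun i => f (x i)) k = f (pprod m x k) := by
  induction k with
  | zero => simp [pprod]
  | succ k ih =>
    rw [pprod, pprod, ih, map_mul]
    congr 1
    split
    · rfl
    · rw [map_one]

lemma prodX_map {M N : Type*} [Monoid M] [Monoid N] (f : M →* N) (m : ℕ) (x : Fin m → M) :
    prodX m (fun i => f (x i)) = f (prodX m x) := pprod_map f m x m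

lemma pprod_diagonal {n : ℕ} (m : ℕ) (w : Fin n → ℂ) :
    ∀ k, k ≤ m → pprod m (fun _ => Matrix.diagonal w) k = Matrix.diagonal (fun i => w i ^ k) := by
  intro k
  induction k with
  | zero => intro _; simp [pprod]
  | succ k ih =>
    intro hk
    rw [pprod, ih (by omega), dif_pos (by omega : k < m), Matrix.diagonal_mul_diagonal]
    have : (fun i => w i * w i ^ k) = fun i : Fin n => w i ^ (k + 1) :=
      funext fun i => by rw [pow_succ, mul_comm]
    rw [this]

lemma prodX_diagonal {n : ℕ} (m : ℕ) (w : Fin n → ℂ) :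
    prodX m (fun _ => Matrix.diagonal w) = Matrix.diagonal (fun i => w i ^ m) :=
  pprod_diagonal m w m le_rfl

section telescope

variable {M : Type*} [Monoid M] {m : ℕ} [NeZero m]

lemma pprod_gauge (g : Fin m → Mˣ) (x : Fin m → M) :
    ∀ k, k ≤ m → pprod m (fun i => ↑(g (i + 1))⁻¹ * x i * ↑(g i)) k
      = (if h : k < m then (↑(g ⟨k, h⟩)⁻¹ : M) else ↑(g 0)⁻¹) * pprod m x k * ↑(g 0) := by
  intro k
  induction k with
  | zero =>
    intro _
    rw [dif_pos (Nat.pos_of_ne_zero (NeZero.ne m))]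
    have h0 : (⟨0, Nat.pos_of_ne_zero (NeZero.ne m)⟩ : Fin m) = 0 := rfl
    rw [h0, pprod, pprod, mul_one, Units.inv_mul]
  | succ k ih =>
    intro hk1
    have hk : k < m := hk1
    rw [pprod, pprod, ih (le_of_lt hk)]
    simp only [dif_pos hk]
    have hval : (⟨k, hk⟩ + 1 : Fin m) = if h : k + 1 < m then (⟨k + 1, h⟩ : Fin m) else 0 := by
      split
      · next h =>
        apply Fin.ext
        rw [fin_add_one_val]
        exact Nat.mod_eq_of_lt h
      · next h =>
        have : k + 1 = m := by omega
        apply Fin.ext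
        rw [fin_add_one_val]
        simp [this]
    calc (↑(g (⟨k, hk⟩ + 1))⁻¹ : M) * x ⟨k, hk⟩ * ↑(g ⟨k, hk⟩) *
          ((↑(g ⟨k, hk⟩)⁻¹ : M) * pprod m x k * ↑(g 0))
        = (↑(g (⟨k, hk⟩ + 1))⁻¹ : M) * x ⟨k, hk⟩ *
            ((↑(g ⟨k, hk⟩) : M) * ↑(g ⟨k, hk⟩)⁻¹) * pprod m x k * ↑(g 0) := by
          simp only [mul_assoc]
      _ = (↑(g (⟨k, hk⟩ + 1))⁻¹ : M) * (x ⟨k, hk⟩ * pprod m x k) * ↑(g 0) := by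
          rw [Units.mul_inv, mul_one]
          simp only [mul_assoc]
      _ = (if h : k + 1 < m then (↑(g ⟨k + 1, h⟩)⁻¹ : M) else ↑(g 0)⁻¹) *
            (x ⟨k, hk⟩ * pprod m x k) * ↑(g 0) := by
          rw [hval]
          split
          · rfl
          · rfl

lemma prodX_gauge (g : Fin m → Mˣ) (x : Fin m → M) :
    prodX m (fun i => ↑(g (i + 1))⁻¹ * x i * ↑(g i))
      = ↑(g 0)⁻¹ * prodX m x * ↑(g 0) := by
  have := pprod_gauge g x m le_rfl
  rw [prodX, prodX, this, dif_neg (lt_irrefl m)]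

/-- gauge a tuple of invertibles to (1,...,1, product) -/
lemma exists_gauge (u : Fin m → Mˣ) :
    ∃ g : Fin m → Mˣ, ∀ i : Fin m,
      (↑(g (i + 1))⁻¹ : M) * ↑(u i) * ↑(g i)
        = if (i : ℕ) + 1 = m then prodX m (fun j => ↑(u j)) else 1 := by
  set G : ℕ → Mˣ := fun k => Nat.rec 1 (fun k p => (if h : k < m then u ⟨k, h⟩ else 1) * p) k
    with hG
  have hGsucc : ∀ k, G (k + 1) = (if h : k < m then u ⟨k, h⟩ else 1) * G k := fun k => rfl
  have hGval : ∀ k, (↑(G k) : M) = pprod m (fun j => ↑(u j)) k := by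
    intro k
    induction k with
    | zero => rfl
    | succ k ih =>
      rw [hGsucc, pprod, Units.val_mul, ih]
      congr 1
      split
      · rfl
      · rfl
  refine ⟨fun i => G i.val, ?_⟩
  intro i
  by_cases h : (i : ℕ) + 1 = m
  · rw [if_pos h]
    have h1 : (i + 1 : Fin m) = 0 := by
      apply Fin.ext
      rw [fin_add_one_val, h, Nat.mod_self]
      rfl
    rw [h1]
    show (↑(G (0 : Fin m).val)⁻¹ : M) * ↑(u i) * ↑(G i.val) = prodX m fun j => ↑(u j)
    have h2 : G (0 : Fin m).val = 1 := rfl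
    rw [h2, inv_one, Units.val_one, one_mul, ← Units.val_mul]
    have h3 : u i * G i.val = G ((i : ℕ) + 1) := by
      rw [hGsucc, dif_pos i.isLt, Fin.eta]
    rw [h3, show ((i : ℕ) + 1) = m from h]
    exact hGval m
  · rw [if_neg h]
    have hlt : (i : ℕ) + 1 < m := by have := i.isLt; omega
    have h1 : (i + 1 : Fin m) = ⟨(i : ℕ) + 1, hlt⟩ := by
      apply Fin.ext
      rw [fin_add_one_val]
      exact Nat.mod_eq_of_lt hlt
    rw [h1]
    show (↑(G ((⟨(i : ℕ) + 1, hlt⟩ : Fin m)).val)⁻¹ : M) * ↑(u i) * ↑(G i.val) = 1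
    have h2 : G ((⟨(i : ℕ) + 1, hlt⟩ : Fin m)).val = u i * G i.val := by
      show G ((i : ℕ) + 1) = _
      rw [hGsucc, dif_pos i.isLt, Fin.eta]
    rw [h2, ← Units.val_mul, ← Units.val_mul]
    have h3 : (u i * G (i : ℕ))⁻¹ * u i * G (i : ℕ) = (1 : Mˣ) := by group
    rw [h3, Units.val_one]

end telescope

noncomputable def evalM (n : ℕ) (Q : MvPolynomial (Fin n × Fin n) ℂ) (A : Matrix (Fin n) (Fin n) ℂ) : ℂ :=
  eval (fun p => A p.1 p.2) Q

noncomputable def genM (n : ℕ) : Matrix (Fin n) (Fin n) (MvPolynomial (Fin n × Fin n) ℂ) :=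
  Matrix.of fun i j => X (i, j)

lemma genM_map (n : ℕ) (A : Matrix (Fin n) (Fin n) ℂ) :
    (genM n).map (eval (fun p => A p.1 p.2)) = A := by
  ext i j
  simp [genM]

lemma coeff_charpoly_eval (n : ℕ) (A : Matrix (Fin n) (Fin n) ℂ) (k : ℕ) :
    eval (fun p => A p.1 p.2) ((genM n).charpoly.coeff k) = A.charpoly.coeff k := by
  have h1 : A.charpoly = (genM n).charpoly.map (eval (fun p => A p.1 p.2)) := by
    rw [← Matrix.charpoly_map, genM_map]
  rw [h1, Polynomial.coeff_map]

noncomputable def discD (n : ℕ) : MvPolynomial (Fin n) ℂ :=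
  ∏ p ∈ Finset.univ.offDiag, (X p.1 - X p.2)

lemma discD_symm (n : ℕ) : (discD n).IsSymmetric := by
  intro σ
  rw [discD, map_prod]
  simp only [map_sub, rename_X]
  rw [← discD]
  apply Finset.prod_bij (fun p _ => (σ p.1, σ p.2))
  · intro p hp
    simp only [Finset.mem_offDiag] at hp ⊢
    exact ⟨Finset.mem_univ _, Finset.mem_univ _, fun h => hp.2.2 (σ.injective h)⟩
  · intro p hp q hq h
    simp only [Prod.mk.injEq] at h
    exact Prod.ext (σ.injective h.1) (σ.injective h.2)
  · intro q hq
    refine ⟨(σ⁻¹ q.1, σ⁻¹ q.2), ?_, ?_⟩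
    · simp only [Finset.mem_offDiag] at hq ⊢
      exact ⟨Finset.mem_univ _, Finset.mem_univ _, fun h => hq.2.2 (σ⁻¹.injective h)⟩
    · simp
  · intro p hp
    rfl

lemma eval_discD_ne_zero_iff (n : ℕ) (z : Fin n → ℂ) :
    eval z (discD n) ≠ 0 ↔ Function.Injective z := by
  rw [discD, map_prod]
  constructor
  · intro h i j hij
    by_contra hne
    apply h
    apply Finset.prod_eq_zero
      (Finset.mem_offDiag.mpr ⟨Finset.mem_univ i, Finset.mem_univ j, (hne : i ≠ j)⟩ :
        (i, j) ∈ Finset.univ.offDiag)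
    simp [hij]
  · intro hinj
    rw [Finset.prod_ne_zero_iff]
    intro p hp
    rw [Finset.mem_offDiag] at hp
    simp only [map_sub, eval_X]
    exact sub_ne_zero.mpr (fun h => hp.2.2 (hinj h))

section core

variable {n : ℕ}

-- the discriminant-like polynomial in matrix entries
noncomputable def deltaP (n : ℕ) (s : MvPolynomial (Fin n) ℂ) :
    MvPolynomial (Fin n × Fin n) ℂ :=
  bind₁ (fun i : Fin n =>
    (-1 : MvPolynomial (Fin n × Fin n) ℂ) ^ ((i : ℕ) + 1)
      * (genM n).charpoly.coeff (n - ((i : ℕ) + 1))) s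

lemma deltaP_eval (s : MvPolynomial (Fin n) ℂ)
    (hs : aeval (fun i : Fin n => esymm (Fin n) ℂ ((i : ℕ) + 1)) s = discD n)
    (A : Matrix (Fin n) (Fin n) ℂ) (z : Fin n → ℂ)
    (hz : A.charpoly = ∏ i : Fin n, (Polynomial.X - Polynomial.C (z i))) :
    evalM n (deltaP n s) A = eval z (discD n) := by
  rw [evalM, deltaP, eval_bind]
  have h1 : ∀ i : Fin n,
      eval (fun p => A p.1 p.2) ((-1 : MvPolynomial (Fin n × Fin n) ℂ) ^ ((i : ℕ) + 1)
        * (genM n).charpoly.coeff (n - ((i : ℕ) + 1)))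
      = eval z (esymm (Fin n) ℂ ((i : ℕ) + 1)) := by
    intro i
    rw [map_mul, map_pow, map_neg, map_one, coeff_charpoly_eval, hz,
      vieta_coeff z (by omega : (i : ℕ) + 1 ≤ n), ← mul_assoc, ← mul_pow, neg_mul_neg,
      one_mul, one_pow, one_mul]
  calc eval (fun i : Fin n => eval (fun p => A p.1 p.2)
          ((-1 : MvPolynomial (Fin n × Fin n) ℂ) ^ ((i : ℕ) + 1)
            * (genM n).charpoly.coeff (n - ((i : ℕ) + 1)))) s
      = eval (fun i : Fin n => eval z (esymm (Fin n) ℂ ((i : ℕ) + 1))) s := by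
        rw [funext h1]
    _ = eval z (aeval (fun i : Fin n => esymm (Fin n) ℂ ((i : ℕ) + 1)) s) := by
        rw [aeval_eq_bind₁, eval_bind]
    _ = eval z (discD n) := by rw [hs]

-- Krylov matrix
noncomputable def LmatP (n : ℕ) [NeZero n] : Matrix (Fin n) (Fin n) (MvPolynomial (Fin n × Fin n) ℂ) :=
  Matrix.of fun i j => ((genM n) ^ (i : ℕ)) 0 j

def Lmat {n : ℕ} [NeZero n] (A : Matrix (Fin n) (Fin n) ℂ) : Matrix (Fin n) (Fin n) ℂ :=
  Matrix.of fun i j => (A ^ (i : ℕ)) 0 j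

lemma LmatP_eval [NeZero n] (A : Matrix (Fin n) (Fin n) ℂ) :
    eval (fun p => A p.1 p.2) (LmatP n).det = (Lmat A).det := by
  rw [RingHom.map_det]
  congr 1
  ext i j
  show eval (fun p => A p.1 p.2) (((genM n) ^ (i : ℕ)) 0 j) = (A ^ (i : ℕ)) 0 j
  have h1 : ((genM n).map (eval (fun p => A p.1 p.2))) ^ (i : ℕ) = A ^ (i : ℕ) := by
    rw [genM_map]
  have h2 : ((genM n) ^ (i : ℕ)).map (eval (fun p => A p.1 p.2))
      = ((genM n).map (eval (fun p => A p.1 p.2))) ^ (i : ℕ) := by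
    exact map_pow ((eval (fun p : Fin n × Fin n => A p.1 p.2)).mapMatrix) (genM n) (i : ℕ)
  rw [← h1, ← h2]
  rfl

-- Cayley-Hamilton in expanded form
lemma pow_card_eq_neg_sum (A : Matrix (Fin n) (Fin n) ℂ) :
    A ^ n = -∑ k ∈ Finset.range n, A.charpoly.coeff k • A ^ k := by
  have hCH := A.aeval_self_charpoly
  have hdeg : A.charpoly.natDegree = n := by
    rw [Matrix.charpoly_natDegree_eq_dim, Fintype.card_fin]
  rw [Polynomial.aeval_eq_sum_range, hdeg, Finset.sum_range_succ] at hCH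
  have hc : A.charpoly.coeff n = 1 := by
    have := A.charpoly_monic.coeff_natDegree
    rwa [hdeg] at this
  rw [hc, one_smul] at hCH
  linear_combination (norm := abel) hCH

section core2

variable {n : ℕ} [NeZero n]

lemma conj_diag_vanish_aux (Q : MvPolynomial (Fin n × Fin n) ℂ)
    (hconj : ∀ (u : (Matrix (Fin n) (Fin n) ℂ)ˣ) (A : Matrix (Fin n) (Fin n) ℂ),
      evalM n Q ((↑u⁻¹ : Matrix (Fin n) (Fin n) ℂ) * A * (↑u : Matrix (Fin n) (Fin n) ℂ))
        = evalM n Q A)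
    (hdiag : ∀ z : Fin n → ℂ, evalM n Q (Matrix.diagonal z) = 0)
    (A : Matrix (Fin n) (Fin n) ℂ) : evalM n Q A = 0 := by
  obtain ⟨s, hs⟩ := (esymmAlgHom_fin_bijective ℂ n).2 ⟨discD n, discD_symm n⟩
  have hs' : aeval (fun i : Fin n => esymm (Fin n) ℂ ((i : ℕ) + 1)) s = discD n := by
    have := congrArg Subtype.val hs
    rw [esymmAlgHom_apply] at this
    exact this
  -- the key pointwise vanishing
  have key : ∀ B : Matrix (Fin n) (Fin n) ℂ,
      (Lmat B).det ≠ 0 → evalM n (deltaP n s) B ≠ 0 → evalM n Q B = 0 := by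
    intro B hdetL hΔ
    obtain ⟨z, hz⟩ := exists_root_label B
    have hzeval : evalM n (deltaP n s) B = eval z (discD n) := deltaP_eval s hs' B z hz
    have hzinj : Function.Injective z :=
      (eval_discD_ne_zero_iff n z).mp (by rw [← hzeval]; exact hΔ)
    -- Vandermonde
    set V : Matrix (Fin n) (Fin n) ℂ := Matrix.of fun i j => z j ^ (i : ℕ) with hV
    have hdetV : V.det ≠ 0 := by
      have hVt : V.transpose = Matrix.vandermonde z := by
        ext i j
        rfl
      have : V.det = (Matrix.vandermonde z).det := by rw [← hVt, Matrix.det_transpose]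
      rw [this, Matrix.det_vandermonde]
      rw [Finset.prod_ne_zero_iff]
      intro i _
      rw [Finset.prod_ne_zero_iff]
      intro j hj
      rw [Finset.mem_Ioi] at hj
      exact sub_ne_zero.mpr (fun h => absurd (hzinj h) (ne_of_gt hj))
    have hUL : IsUnit (Lmat B) := (Matrix.isUnit_iff_isUnit_det _).mpr (isUnit_iff_ne_zero.mpr hdetL)
    have hUV : IsUnit V := (Matrix.isUnit_iff_isUnit_det _).mpr (isUnit_iff_ne_zero.mpr hdetV)
    set S : Matrix (Fin n) (Fin n) ℂ := Matrix.of fun i j =>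
      if (i : ℕ) + 1 < n then (if (j : ℕ) = (i : ℕ) + 1 then (1 : ℂ) else 0)
      else -(B.charpoly.coeff (j : ℕ)) with hS
    -- identity 1 : Lmat B * B = S * Lmat B
    have hdeg : B.charpoly.natDegree = n := by
      rw [Matrix.charpoly_natDegree_eq_dim, Fintype.card_fin]
    have id1 : Lmat B * B = S * Lmat B := by
      ext i j
      rw [Matrix.mul_apply, Matrix.mul_apply]
      have lhs_eq : ∑ k, Lmat B i k * B k j = (B ^ ((i : ℕ) + 1)) 0 j := by
        rw [pow_succ, Matrix.mul_apply]
        rfl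
      rw [lhs_eq]
      by_cases hi : (i : ℕ) + 1 < n
      · rw [Finset.sum_eq_single (⟨(i : ℕ) + 1, hi⟩ : Fin n)]
        · rw [hS]
          simp only [Matrix.of_apply, if_pos hi, if_pos rfl, if_true, one_mul]
          rfl
        · intro k _ hk
          rw [hS]
          simp only [Matrix.of_apply, if_pos hi]
          rw [if_neg, zero_mul]
          intro hvk
          exact hk (Fin.ext hvk)
        · intro h
          exact absurd (Finset.mem_univ _) h
      · have hin : (i : ℕ) + 1 = n := by have := i.isLt; omega
        have hBn : (B ^ ((i : ℕ) + 1)) 0 j = (B ^ n) 0 j := by rw [hin]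
        rw [hBn, pow_card_eq_neg_sum, Matrix.neg_apply, Matrix.sum_apply]
        have hRHS : ∑ k, S i k * Lmat B k j
            = ∑ k : Fin n, -(B.charpoly.coeff (k : ℕ)) * (B ^ (k : ℕ)) 0 j := by
          apply Finset.sum_congr rfl
          intro k _
          rw [hS]
          simp only [Matrix.of_apply, if_neg hi]
          rfl
        rw [hRHS, ← Fin.sum_univ_eq_sum_range (fun k => (B.charpoly.coeff k • B ^ k) 0 j) n,
          ← Finset.sum_neg_distrib]
        apply Finset.sum_congr rfl
        intro k _
        rw [Matrix.smul_apply, smul_eq_mul, neg_mul]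
    -- identity 2 : S * V = V * diagonal z
    have id2 : S * V = V * Matrix.diagonal z := by
      ext i j
      rw [Matrix.mul_apply, Matrix.mul_diagonal]
      by_cases hi : (i : ℕ) + 1 < n
      · rw [Finset.sum_eq_single (⟨(i : ℕ) + 1, hi⟩ : Fin n)]
        · rw [hS, hV]
          simp only [Matrix.of_apply, if_pos hi, if_pos rfl, if_true, one_mul]
          show z j ^ ((i : ℕ) + 1) = z j ^ (i : ℕ) * z j
          rw [pow_succ]
        · intro k _ hk
          rw [hS]
          simp only [Matrix.of_apply, if_pos hi]
          rw [if_neg, zero_mul]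
          intro hvk
          exact hk (Fin.ext hvk)
        · intro h
          exact absurd (Finset.mem_univ _) h
      · have hin : (i : ℕ) + 1 = n := by have := i.isLt; omega
        have heval : Polynomial.eval (z j) B.charpoly = 0 := by
          rw [hz, Polynomial.eval_prod]
          apply Finset.prod_eq_zero (Finset.mem_univ j)
          simp
        have hcn : B.charpoly.coeff n = 1 := by
          have := B.charpoly_monic.coeff_natDegree
          rwa [hdeg] at this
        have h2 : z j ^ n = -∑ k ∈ Finset.range n, B.charpoly.coeff k * z j ^ k := by
          rw [Polynomial.eval_eq_sum_range, hdeg, Finset.sum_range_succ, hcn, one_mul] at heval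
          linear_combination heval
        have hsum : ∑ k, S i k * V k j
            = ∑ k : Fin n, -(B.charpoly.coeff (k : ℕ)) * z j ^ (k : ℕ) := by
          apply Finset.sum_congr rfl
          intro k _
          rw [hS, hV]
          simp only [Matrix.of_apply, if_neg hi]
        have hV' : V i j * z j = z j ^ n := by
          rw [hV]
          show z j ^ (i : ℕ) * z j = _
          rw [← pow_succ, hin]
        rw [hsum, hV', h2, ← Fin.sum_univ_eq_sum_range (fun k => B.charpoly.coeff k * z j ^ k) n,
          ← Finset.sum_neg_distrib]
        apply Finset.sum_congr rfl
        intro k _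
        rw [neg_mul]
    -- conclude
    obtain ⟨uL, hLu⟩ := hUL
    obtain ⟨uV, hVu⟩ := hUV
    have hB : B = (↑uL⁻¹ : Matrix (Fin n) (Fin n) ℂ) * S * (uL : Matrix (Fin n) (Fin n) ℂ) := by
      have h1 : (uL : Matrix (Fin n) (Fin n) ℂ) * B
          = S * (uL : Matrix (Fin n) (Fin n) ℂ) := by
        rw [hLu]; exact id1
      have h2 : (↑uL⁻¹ : Matrix (Fin n) (Fin n) ℂ) * ((uL : Matrix (Fin n) (Fin n) ℂ) * B)
          = B := by
        rw [← mul_assoc, Units.inv_mul, one_mul]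
      rw [← h2, h1, mul_assoc]
    have e1 : evalM n Q B = evalM n Q S := by
      rw [hB]; exact hconj uL S
    have hdg : (↑uV⁻¹ : Matrix (Fin n) (Fin n) ℂ) * S * (uV : Matrix (Fin n) (Fin n) ℂ)
        = Matrix.diagonal z := by
      rw [mul_assoc, hVu, id2, ← mul_assoc, ← hVu, Units.inv_mul, one_mul]
    have e2 : evalM n Q S = 0 := by
      rw [← hconj uV S, hdg]
      exact hdiag z
    rw [e1, e2]
  -- witness point
  set z₀ : Fin n → ℂ := fun i => ((i : ℕ) : ℂ) with hz₀
  have hz₀inj : Function.Injective z₀ := by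
    intro i j h
    exact Fin.ext (Nat.cast_injective h)
  set V₀ : Matrix (Fin n) (Fin n) ℂ := Matrix.of fun i j => z₀ j ^ (i : ℕ) with hV₀
  have hdetV₀ : V₀.det ≠ 0 := by
    have hVt : V₀.transpose = Matrix.vandermonde z₀ := by
      ext i j
      rfl
    have h3 : V₀.det = (Matrix.vandermonde z₀).det := by rw [← hVt, Matrix.det_transpose]
    rw [h3, Matrix.det_vandermonde, Finset.prod_ne_zero_iff]
    intro i _
    rw [Finset.prod_ne_zero_iff]
    intro j hj
    rw [Finset.mem_Ioi] at hj
    exact sub_ne_zero.mpr (fun h => absurd (hz₀inj h) (ne_of_gt hj))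
  obtain ⟨u, huv⟩ := (Matrix.isUnit_iff_isUnit_det _).mpr (isUnit_iff_ne_zero.mpr hdetV₀)
  set Wc : Matrix (Fin n) (Fin n) ℂ := (↑u⁻¹ : Matrix (Fin n) (Fin n) ℂ) with hWc
  have hUW : V₀ * Wc = 1 := by rw [← huv, hWc]; exact Units.mul_inv u
  have hWU : Wc * V₀ = 1 := by rw [← huv, hWc]; exact Units.inv_mul u
  set A₀ : Matrix (Fin n) (Fin n) ℂ := V₀ * Matrix.diagonal z₀ * Wc with hA₀
  have hA₀pow : ∀ k : ℕ, A₀ ^ k = V₀ * (Matrix.diagonal z₀) ^ k * Wc := by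
    intro k
    induction k with
    | zero => rw [pow_zero, pow_zero, mul_one, hUW]
    | succ k ih =>
      rw [pow_succ, ih, hA₀, pow_succ]
      calc V₀ * Matrix.diagonal z₀ ^ k * Wc * (V₀ * Matrix.diagonal z₀ * Wc)
          = V₀ * Matrix.diagonal z₀ ^ k * (Wc * V₀) * Matrix.diagonal z₀ * Wc := by
            simp only [mul_assoc]
        _ = V₀ * (Matrix.diagonal z₀ ^ k * Matrix.diagonal z₀) * Wc := by
            rw [hWU, mul_one]
            simp only [mul_assoc]
  have hLA₀ : Lmat A₀ = 1 := by
    ext i j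
    show (A₀ ^ (i : ℕ)) 0 j = (1 : Matrix (Fin n) (Fin n) ℂ) i j
    rw [hA₀pow, Matrix.diagonal_pow, Matrix.mul_apply]
    have hterm : ∀ l, (V₀ * Matrix.diagonal (z₀ ^ (i : ℕ))) 0 l = V₀ i l := by
      intro l
      rw [Matrix.mul_diagonal, hV₀]
      show z₀ l ^ ((0 : Fin n) : ℕ) * (z₀ ^ (i : ℕ)) l = _
      rw [show ((0 : Fin n) : ℕ) = 0 from rfl, pow_zero, one_mul]
      rfl
    calc ∑ l, (V₀ * Matrix.diagonal (z₀ ^ (i : ℕ))) 0 l * Wc l j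
        = ∑ l, V₀ i l * Wc l j := by
          apply Finset.sum_congr rfl
          intro l _
          rw [hterm l]
      _ = (V₀ * Wc) i j := by rw [Matrix.mul_apply]
      _ = (1 : Matrix (Fin n) (Fin n) ℂ) i j := by rw [hUW]
  have hcharA₀ : A₀.charpoly = ∏ i : Fin n, (Polynomial.X - Polynomial.C (z₀ i)) := by
    have h1 : A₀ = (u : Matrix (Fin n) (Fin n) ℂ) * Matrix.diagonal z₀ *
        (↑u⁻¹ : Matrix (Fin n) (Fin n) ℂ) := by
      rw [hA₀, huv, hWc]
    rw [h1, charpoly_units_conj u (Matrix.diagonal z₀),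
      Matrix.charpoly_of_upperTriangular _ (Matrix.blockTriangular_diagonal z₀)]
    apply Finset.prod_congr rfl
    intro i _
    rw [Matrix.diagonal_apply_eq]
  have hΔ₀ : evalM n (deltaP n s) A₀ ≠ 0 := by
    rw [deltaP_eval s hs' A₀ z₀ hcharA₀]
    exact (eval_discD_ne_zero_iff n z₀).mpr hz₀inj
  -- conclude Q = 0
  have hQ0 : Q = 0 := by
    apply eval_eq_zero_of_eval_mul Q ((LmatP n).det * deltaP n s) ?_
      (fun p => A₀ p.1 p.2) ?_
    · intro x hx
      set B : Matrix (Fin n) (Fin n) ℂ := Matrix.of fun i j => x (i, j) with hBdef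
      have hxB : x = fun p : Fin n × Fin n => B p.1 p.2 := by
        funext p
        rfl
      rw [hxB, map_mul, LmatP_eval] at hx
      rw [hxB]
      apply key B
      · intro h
        apply hx
        rw [h, zero_mul]
      · intro h
        apply hx
        rw [show eval (fun p : Fin n × Fin n => B p.1 p.2) (deltaP n s)
            = evalM n (deltaP n s) B from rfl, h, mul_zero]
    · rw [map_mul, LmatP_eval, hLA₀, Matrix.det_one, one_mul]
      exact hΔ₀
  rw [evalM, hQ0, map_zero]

end core2

section inj

variable (m n : ℕ) [NeZero m]

lemma conj_diag_vanish (Q : MvPolynomial (Fin n × Fin n) ℂ)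
    (hconj : ∀ (u : (Matrix (Fin n) (Fin n) ℂ)ˣ) (A : Matrix (Fin n) (Fin n) ℂ),
      evalM n Q ((↑u⁻¹ : Matrix (Fin n) (Fin n) ℂ) * A * (↑u : Matrix (Fin n) (Fin n) ℂ))
        = evalM n Q A)
    (hdiag : ∀ z : Fin n → ℂ, evalM n Q (Matrix.diagonal z) = 0)
    (A : Matrix (Fin n) (Fin n) ℂ) : evalM n Q A = 0 := by
  rcases Nat.eq_zero_or_pos n with h0 | hpos
  · subst h0
    have hsub : Subsingleton (Matrix (Fin 0) (Fin 0) ℂ) :=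
      ⟨fun a b => by ext i j; exact i.elim0⟩
    have : A = Matrix.diagonal (fun _ => (0 : ℂ)) := hsub.elim _ _
    rw [this]
    exact hdiag _
  · have : NeZero n := ⟨by omega⟩
    exact conj_diag_vanish_aux Q hconj hdiag A

def tupleAt (A : Matrix (Fin n) (Fin n) ℂ) : Fin m → Matrix (Fin n) (Fin n) ℂ :=
  fun i => if (i : ℕ) + 1 = m then A else 1

noncomputable def Pmat (f : MvPolynomial (Fin m × Fin n × Fin n) ℂ) :
    MvPolynomial (Fin n × Fin n) ℂ :=
  bind₁ (fun p : Fin m × Fin n × Fin n =>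
    if (p.1 : ℕ) + 1 = m then X p.2
    else C ((1 : Matrix (Fin n) (Fin n) ℂ) p.2.1 p.2.2)) f

lemma Pmat_eval (f : MvPolynomial (Fin m × Fin n × Fin n) ℂ) (A : Matrix (Fin n) (Fin n) ℂ) :
    evalM n (Pmat m n f) A = evalRep m n f (tupleAt m n A) := by
  rw [evalM, Pmat, eval_bind, evalRep]
  have hfun : (fun p : Fin m × Fin n × Fin n => eval (fun q : Fin n × Fin n => A q.1 q.2)
      (if (p.1 : ℕ) + 1 = m then X p.2 else C ((1 : Matrix (Fin n) (Fin n) ℂ) p.2.1 p.2.2)))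
      = fun p : Fin m × Fin n × Fin n => tupleAt m n A p.1 p.2.1 p.2.2 := by
    funext p
    by_cases h : (p.1 : ℕ) + 1 = m
    · rw [if_pos h, eval_X]
      show A p.2.1 p.2.2 = tupleAt m n A p.1 p.2.1 p.2.2
      rw [tupleAt, if_pos h]
    · rw [if_neg h, eval_C]
      show (1 : Matrix (Fin n) (Fin n) ℂ) p.2.1 p.2.2 = tupleAt m n A p.1 p.2.1 p.2.2
      rw [tupleAt, if_neg h]
  rw [hfun]

variable {m n}

lemma Pmat_conj (f : MvPolynomial (Fin m × Fin n × Fin n) ℂ) (hf : GInvRep m n f)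
    (u : (Matrix (Fin n) (Fin n) ℂ)ˣ) (A : Matrix (Fin n) (Fin n) ℂ) :
    evalM n (Pmat m n f) ((↑u⁻¹ : Matrix (Fin n) (Fin n) ℂ) * A *
      (↑u : Matrix (Fin n) (Fin n) ℂ)) = evalM n (Pmat m n f) A := by
  rw [Pmat_eval, Pmat_eval]
  have h1 := hf (fun _ => u) (tupleAt m n A)
  have h2 : (fun i : Fin m => (((fun _ : Fin m => u) (i + 1))⁻¹).val *
      tupleAt m n A i * ((fun _ : Fin m => u) i).val)
      = tupleAt m n ((↑u⁻¹ : Matrix (Fin n) (Fin n) ℂ) * A * (↑u : Matrix (Fin n) (Fin n) ℂ)) := by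
    funext i
    show (↑u⁻¹ : Matrix (Fin n) (Fin n) ℂ) * tupleAt m n A i * (↑u : Matrix (Fin n) (Fin n) ℂ) = _
    rw [tupleAt, tupleAt]
    by_cases h : (i : ℕ) + 1 = m
    · rw [if_pos h, if_pos h]
    · rw [if_neg h, if_neg h, mul_one, Units.inv_mul]
  rw [← h2]
  exact h1

lemma evalRep_units (f : MvPolynomial (Fin m × Fin n × Fin n) ℂ) (hf : GInvRep m n f)
    (u : Fin m → (Matrix (Fin n) (Fin n) ℂ)ˣ) :
    evalRep m n f (fun i => ↑(u i))
      = evalM n (Pmat m n f) (prodX m (fun i => (↑(u i) : Matrix (Fin n) (Fin n) ℂ))) := by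
  obtain ⟨g, hg⟩ := exists_gauge u
  have h1 := hf g (fun i => ↑(u i))
  rw [Pmat_eval]
  have h2 : (fun i : Fin m => ((g (i + 1))⁻¹).val * (↑(u i) : Matrix (Fin n) (Fin n) ℂ) *
      (g i).val)
      = tupleAt m n (prodX m (fun i => (↑(u i) : Matrix (Fin n) (Fin n) ℂ))) := by
    funext i
    rw [hg i, tupleAt]
  rw [← h2]
  exact h1.symm

lemma evalRep_diag_units (f : MvPolynomial (Fin m × Fin n × Fin n) ℂ) (hf : GInvRep m n f)
    (w : Fin n → ℂ) (hw : ∀ i, w i ≠ 0) :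
    evalRep m n f (fun _ => Matrix.diagonal w)
      = evalM n (Pmat m n f) (Matrix.diagonal (fun i => w i ^ m)) := by
  have hdet : (Matrix.diagonal w).det ≠ 0 := by
    rw [Matrix.det_diagonal]
    exact Finset.prod_ne_zero_iff.mpr (fun i _ => hw i)
  obtain ⟨dw, hdw⟩ := (Matrix.isUnit_iff_isUnit_det _).mpr (isUnit_iff_ne_zero.mpr hdet)
  have h1 : (fun _ : Fin m => Matrix.diagonal w) = fun i : Fin m => (↑dw : Matrix (Fin n) (Fin n) ℂ) := by
    funext i
    rw [hdw]
  rw [h1, evalRep_units f hf (fun _ => dw)]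
  congr 1
  have h2 : (fun _ : Fin m => (↑dw : Matrix (Fin n) (Fin n) ℂ))
      = fun _ : Fin m => Matrix.diagonal w := by
    funext i
    rw [hdw]
  rw [h2, prodX_diagonal]

lemma exists_mth_root (c : ℂ) : ∃ w : ℂ, w ^ m = c :=
  IsAlgClosed.exists_pow_nat_eq c (Nat.pos_of_ne_zero (NeZero.ne m))

lemma Pmat_diag_eq (f f' : MvPolynomial (Fin m × Fin n × Fin n) ℂ)
    (hf : GInvRep m n f) (hf' : GInvRep m n f')
    (hdiageq : ∀ z : Fin n → ℂ,
      evalRep m n f (fun _ => Matrix.diagonal z) = evalRep m n f' (fun _ => Matrix.diagonal z))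
    (z : Fin n → ℂ) :
    evalM n (Pmat m n f - Pmat m n f') (Matrix.diagonal z) = 0 := by
  set Q := Pmat m n f - Pmat m n f' with hQ
  set Qd : MvPolynomial (Fin n) ℂ :=
    bind₁ (fun p : Fin n × Fin n => if p.1 = p.2 then X p.1 else 0) Q with hQd
  have hQdeval : ∀ v : Fin n → ℂ, eval v Qd = evalM n Q (Matrix.diagonal v) := by
    intro v
    rw [hQd, eval_bind, evalM]
    have hfun : (fun p : Fin n × Fin n => eval v (if p.1 = p.2 then X p.1 else 0))
        = fun p : Fin n × Fin n => Matrix.diagonal v p.1 p.2 := by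
      funext p
      by_cases h : p.1 = p.2
      · rw [if_pos h, eval_X, Matrix.diagonal_apply, if_pos h]
      · rw [if_neg h, map_zero, Matrix.diagonal_apply, if_neg h]
    rw [hfun]
  have hvan : ∀ v : Fin n → ℂ, (∀ i, v i ≠ 0) → eval v Qd = 0 := by
    intro v hv
    choose w hwm using fun i => exists_mth_root (m := m) (v i)
    have hw0 : ∀ i, w i ≠ 0 := by
      intro i h
      apply hv i
      rw [← hwm i, h, zero_pow (NeZero.ne m)]
    have hveq : v = fun i => w i ^ m := by
      funext i
      rw [hwm i]
    rw [hQdeval, hQ]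
    show eval (fun p : Fin n × Fin n => Matrix.diagonal v p.1 p.2)
      (Pmat m n f - Pmat m n f') = 0
    rw [map_sub]
    show evalM n (Pmat m n f) (Matrix.diagonal v) - evalM n (Pmat m n f') (Matrix.diagonal v) = 0
    rw [hveq, ← evalRep_diag_units f hf w hw0, ← evalRep_diag_units f' hf' w hw0, hdiageq w,
      sub_self]
  have hQd0 : Qd = 0 := by
    apply eval_eq_zero_of_eval_mul Qd (∏ i : Fin n, X i) ?_ (fun _ => 1) ?_
    · intro v hv
      apply hvan
      intro i hi
      apply hv
      rw [map_prod]
      apply Finset.prod_eq_zero (Finset.mem_univ i)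
      rw [eval_X, hi]
    · rw [map_prod]
      simp
  rw [← hQdeval, hQd0, map_zero]

lemma part3 (f f' : MvPolynomial (Fin m × Fin n × Fin n) ℂ)
    (hf : GInvRep m n f) (hf' : GInvRep m n f')
    (hdiageq : ∀ z : Fin n → ℂ,
      evalRep m n f (fun _ => Matrix.diagonal z) = evalRep m n f' (fun _ => Matrix.diagonal z))
    (x : Fin m → Matrix (Fin n) (Fin n) ℂ) : evalRep m n f x = evalRep m n f' x := by
  set Q := Pmat m n f - Pmat m n f' with hQ
  have hQ0 : ∀ A : Matrix (Fin n) (Fin n) ℂ, evalM n Q A = 0 := by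
    apply conj_diag_vanish
    · intro u A
      rw [hQ]
      have ha : evalM n (Pmat m n f - Pmat m n f')
          ((↑u⁻¹ : Matrix (Fin n) (Fin n) ℂ) * A * (↑u : Matrix (Fin n) (Fin n) ℂ))
          = evalM n (Pmat m n f)
              ((↑u⁻¹ : Matrix (Fin n) (Fin n) ℂ) * A * (↑u : Matrix (Fin n) (Fin n) ℂ))
            - evalM n (Pmat m n f')
              ((↑u⁻¹ : Matrix (Fin n) (Fin n) ℂ) * A * (↑u : Matrix (Fin n) (Fin n) ℂ)) :=
        map_sub (eval _) _ _
      have hb : evalM n (Pmat m n f - Pmat m n f') A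
          = evalM n (Pmat m n f) A - evalM n (Pmat m n f') A :=
        map_sub (eval _) _ _
      rw [ha, hb, Pmat_conj f hf u A, Pmat_conj f' hf' u A]
    · exact Pmat_diag_eq f f' hf hf' hdiageq
  have hPeq : ∀ A, evalM n (Pmat m n f) A = evalM n (Pmat m n f') A := by
    intro A
    have h1 := hQ0 A
    rw [hQ] at h1
    have h3 : evalM n (Pmat m n f - Pmat m n f') A
        = evalM n (Pmat m n f) A - evalM n (Pmat m n f') A :=
      map_sub (eval fun p : Fin n × Fin n => A p.1 p.2) _ _
    rw [h3] at h1
    exact sub_eq_zero.mp h1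
  -- density in x
  set detP : Fin m → MvPolynomial (Fin m × Fin n × Fin n) ℂ :=
    fun i => (Matrix.of fun j k => (X (i, j, k) : MvPolynomial (Fin m × Fin n × Fin n) ℂ)).det
    with hdetP
  have hdetPeval : ∀ (y : Fin m → Matrix (Fin n) (Fin n) ℂ) (i : Fin m),
      evalRep m n (detP i) y = (y i).det := by
    intro y i
    rw [evalRep, hdetP]
    rw [RingHom.map_det]
    congr 1
    ext j k
    show eval (fun p => y p.1 p.2.1 p.2.2) (X (i, j, k)) = y i j k
    rw [eval_X]
  have hsub : f - f' = 0 := by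
    apply eval_eq_zero_of_eval_mul (f - f') (∏ i : Fin m, detP i) ?_
      (fun p => (1 : Matrix (Fin n) (Fin n) ℂ) p.2.1 p.2.2) ?_
    · intro y hy
      set xm : Fin m → Matrix (Fin n) (Fin n) ℂ := fun i => Matrix.of fun j k => y (i, j, k)
        with hxm
      have hyx : y = fun p => xm p.1 p.2.1 p.2.2 := by
        funext p
        rfl
      have hdet : ∀ i, (xm i).det ≠ 0 := by
        intro i hdi
        apply hy
        rw [map_prod]
        apply Finset.prod_eq_zero (Finset.mem_univ i)
        have := hdetPeval xm i
        rw [evalRep, ← hyx] at this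
        rw [this, hdi]
      have hunit : ∀ i, IsUnit (xm i) :=
        fun i => (Matrix.isUnit_iff_isUnit_det _).mpr (isUnit_iff_ne_zero.mpr (hdet i))
      choose u hu using hunit
      have hxu : xm = fun i => (↑(u i) : Matrix (Fin n) (Fin n) ℂ) := by
        funext i
        rw [hu]
      have h5 : evalRep m n f xm = evalRep m n f' xm := by
        rw [hxu, evalRep_units f hf u, evalRep_units f' hf' u, hPeq]
      show eval y (f - f') = 0
      rw [map_sub]
      have h6 : eval y f = evalRep m n f xm := by rw [evalRep, ← hyx]
      have h7 : eval y f' = evalRep m n f' xm := by rw [evalRep, ← hyx]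
      rw [h6, h7, h5, sub_self]
    · rw [map_prod]
      have h8 : ∀ i : Fin m, eval (fun p : Fin m × Fin n × Fin n =>
          (1 : Matrix (Fin n) (Fin n) ℂ) p.2.1 p.2.2) (detP i) = 1 := by
        intro i
        have := hdetPeval (fun _ => 1) i
        rw [evalRep] at this
        rw [this, Matrix.det_one]
      rw [Finset.prod_congr rfl (fun i _ => h8 i), Finset.prod_const_one]
      exact one_ne_zero
  have : evalRep m n f x - evalRep m n f' x = 0 := by
    rw [evalRep, evalRep, ← map_sub, hsub, map_zero]
  exact sub_eq_zero.mp this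

end inj

section surj

variable (m n : ℕ) [NeZero m]

-- Step 1: exponents divisible by m
lemma coeff_scale (a : Fin n → ℂ) (q : MvPolynomial (Fin n) ℂ) (d : Fin n →₀ ℕ) :
    coeff d (bind₁ (fun i => C (a i) * X i) q)
      = (∏ i ∈ d.support, a i ^ d i) * coeff d q := by
  conv_lhs => rw [q.as_sum, map_sum]
  have hmono : ∀ d' : Fin n →₀ ℕ, ∀ c : ℂ,
      bind₁ (fun i => C (a i) * X i) (monomial d' c)
        = monomial d' (c * ∏ i ∈ d'.support, a i ^ d' i) := by
    intro d' c
    rw [bind₁_monomial]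
    have h1 : ∀ i ∈ d'.support, (C (a i) * X i) ^ d' i
        = C (a i ^ d' i) * (X i : MvPolynomial (Fin n) ℂ) ^ d' i := by
      intro i _
      rw [mul_pow, C_pow]
    rw [Finset.prod_congr rfl h1, Finset.prod_mul_distrib, ← map_prod]
    rw [monomial_eq, Finsupp.prod, map_mul]
    ring
  rw [Finset.sum_congr rfl (fun d' _ => hmono d' (coeff d' q))]
  rw [coeff_sum]
  have h2 : ∀ d' ∈ q.support,
      coeff d (monomial d' (coeff d' q * ∏ i ∈ d'.support, a i ^ d' i))
        = if d' = d then coeff d' q * ∏ i ∈ d'.support, a i ^ d' i else 0 := by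
    intro d' _
    rw [coeff_monomial]
  rw [Finset.sum_congr rfl h2, Finset.sum_ite_eq' q.support d]
  by_cases hd : d ∈ q.support
  · rw [if_pos hd, mul_comm]
  · rw [if_neg hd, notMem_support_iff.mp hd, mul_zero]

lemma exp_dvd (q : MvPolynomial (Fin n) ℂ) (hq : WInvDiag m n q) :
    ∀ d ∈ q.support, ∀ i, m ∣ d i := by
  have hscale : ∀ a : Fin n → ℂ, (∀ i, a i ^ m = 1) →
      bind₁ (fun i => C (a i) * X i) q = q := by
    intro a ha
    apply MvPolynomial.funext
    intro z
    rw [eval_bind]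
    have h1 : (fun i : Fin n => eval z (C (a i) * X i)) = fun i => a i * z i := by
      funext i
      rw [map_mul, eval_C, eval_X]
    rw [h1]
    have := hq 1 a ha z
    simpa using this
  intro d hd i
  set ζ : ℂ := Complex.exp (2 * Real.pi * Complex.I / m) with hζdef
  have hζ : IsPrimitiveRoot ζ m := Complex.isPrimitiveRoot_exp m (NeZero.ne m)
  set a : Fin n → ℂ := fun j => if j = i then ζ else 1 with hadef
  have ha : ∀ j, a j ^ m = 1 := by
    intro j
    simp only [hadef]
    by_cases h : j = i
    · rw [if_pos h]
      exact hζ.pow_eq_one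
    · rw [if_neg h, one_pow]
  have heq := hscale a ha
  have hco := coeff_scale n a q d
  rw [heq] at hco
  have hprod : (∏ j ∈ d.support, a j ^ d j) = 1 := by
    have hcq : coeff d q ≠ 0 := mem_support_iff.mp hd
    have h5 : ((∏ j ∈ d.support, a j ^ d j) - 1) * coeff d q = 0 := by
      rw [sub_mul, one_mul, ← hco, sub_self]
    rcases mul_eq_zero.mp h5 with h6 | h6
    · exact sub_eq_zero.mp h6
    · exact absurd h6 hcq
  by_cases hi : i ∈ d.support
  · have h3 : (∏ j ∈ d.support, a j ^ d j) = ζ ^ d i := by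
      simp only [hadef]
      have h4 : ∀ j ∈ d.support, (if j = i then ζ else 1) ^ d j
          = if j = i then ζ ^ d j else 1 := by
        intro j _
        by_cases h : j = i
        · rw [if_pos h, if_pos h]
        · rw [if_neg h, if_neg h, one_pow]
      rw [Finset.prod_congr rfl h4, Finset.prod_ite_eq' d.support i (fun j => ζ ^ d j),
        if_pos hi]
    rw [h3] at hprod
    exact (IsPrimitiveRoot.pow_eq_one_iff_dvd hζ (d i)).mp hprod
  · rw [Finsupp.notMem_support_iff.mp hi]
    exact dvd_zero m
-- Step 2: q = r(z^m)
noncomputable def powm (m n : ℕ) : MvPolynomial (Fin n) ℂ →ₐ[ℂ] MvPolynomial (Fin n) ℂ :=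
  bind₁ (fun i => (X i : MvPolynomial (Fin n) ℂ) ^ m)

lemma eval_powm (z : Fin n → ℂ) (r : MvPolynomial (Fin n) ℂ) :
    eval z (powm m n r) = eval (fun i => z i ^ m) r := by
  rw [powm, eval_bind]
  have hfun : (fun i : Fin n => eval z ((X i : MvPolynomial (Fin n) ℂ) ^ m))
      = fun i => z i ^ m := by
    funext i
    rw [map_pow, eval_X]
  rw [hfun]

lemma exists_preimage_powm (q : MvPolynomial (Fin n) ℂ) (hq : WInvDiag m n q) :
    ∃ r : MvPolynomial (Fin n) ℂ, powm m n r = q := by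
  have hdvd := exp_dvd m n q hq
  refine ⟨∑ d ∈ q.support, monomial (Finsupp.mapRange (fun e => e / m) (by simp) d)
    (coeff d q), ?_⟩
  rw [map_sum]
  conv_rhs => rw [q.as_sum]
  apply Finset.sum_congr rfl
  intro d hd
  rw [powm, bind₁_monomial]
  set e := Finsupp.mapRange (fun e => e / m) (by simp : (0:ℕ)/m = 0) d with he
  have hesupp : e.support = d.support := by
    ext i
    simp only [he, Finsupp.mapRange_apply, Finsupp.mem_support_iff]
    constructor
    · intro h h2
      exact h (by rw [h2]; exact Nat.zero_div m)
    · intro h h2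
      apply h
      obtain ⟨c, hc⟩ := hdvd d hd i
      rw [hc] at h2 ⊢
      rw [Nat.mul_div_cancel_left c (Nat.pos_of_ne_zero (NeZero.ne m))] at h2
      rw [h2, mul_zero]
  have hme : ∀ i, m * e i = d i := by
    intro i
    rw [he, Finsupp.mapRange_apply]
    exact Nat.mul_div_cancel' (hdvd d hd i) 
  rw [monomial_eq, Finsupp.prod, hesupp]
  congr 1
  apply Finset.prod_congr rfl
  intro i _
  rw [← pow_mul, hme i]

-- Step 3: r is symmetric
lemma r_symmetric (q : MvPolynomial (Fin n) ℂ) (hq : WInvDiag m n q)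
    (r : MvPolynomial (Fin n) ℂ) (hr : powm m n r = q) : r.IsSymmetric := by
  intro σ
  apply MvPolynomial.funext
  intro z
  rw [eval_rename]
  choose w hw using fun i => (IsAlgClosed.exists_pow_nat_eq (z i)
    (Nat.pos_of_ne_zero (NeZero.ne m)))
  have hzw : z = fun i => w i ^ m := by
    funext i
    rw [hw i]
  have h1 : eval z r = eval w q := by
    rw [hzw, ← eval_powm, hr]
  have h2 : eval (z ∘ σ) r = eval (w ∘ σ) q := by
    have : z ∘ σ = fun i => (w ∘ σ) i ^ m := by
      funext i
      show z (σ i) = w (σ i) ^ m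
      rw [hw (σ i)]
    rw [this, ← eval_powm, hr]
  rw [h1, h2]
  have h3 := hq σ⁻¹ (fun _ => 1) (fun _ => one_pow m) w
  simp only [one_mul, inv_inv] at h3
  have h4 : (fun i => w (σ i)) = w ∘ σ := rfl
  rw [← h4, ← h3]

-- Step 5-7
noncomputable def genRM (m n : ℕ) (i : Fin m) :
    Matrix (Fin n) (Fin n) (MvPolynomial (Fin m × Fin n × Fin n) ℂ) :=
  Matrix.of fun j k => X (i, j, k)

noncomputable def CPm (m n : ℕ) : Polynomial (MvPolynomial (Fin m × Fin n × Fin n) ℂ) :=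
  (prodX m (fun i => genRM m n i)).charpoly

lemma CPm_coeff_eval (x : Fin m → Matrix (Fin n) (Fin n) ℂ) (k : ℕ) :
    eval (fun p => x p.1 p.2.1 p.2.2) ((CPm m n).coeff k)
      = ((prodX m x).charpoly).coeff k := by
  set φ : Matrix (Fin n) (Fin n) (MvPolynomial (Fin m × Fin n × Fin n) ℂ)
      →+* Matrix (Fin n) (Fin n) ℂ :=
    (eval (fun p : Fin m × Fin n × Fin n => x p.1 p.2.1 p.2.2)).mapMatrix with hφ
  have h1 : φ (prodX m (fun i => genRM m n i)) = prodX m x := by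
    have h0 := prodX_map φ.toMonoidHom m (fun i => genRM m n i)
    have h2 : (fun i => φ.toMonoidHom (genRM m n i)) = x := by
      funext i
      ext j k
      show eval (fun p : Fin m × Fin n × Fin n => x p.1 p.2.1 p.2.2) (X (i, j, k)) = x i j k
      rw [eval_X]
    rw [h2] at h0
    exact h0.symm
  rw [← h1]
  have h5 : φ (prodX m (fun i => genRM m n i))
      = (prodX m (fun i => genRM m n i)).map
          (eval (fun p : Fin m × Fin n × Fin n => x p.1 p.2.1 p.2.2)) := rfl
  rw [h5, Matrix.charpoly_map, Polynomial.coeff_map]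
  rfl

noncomputable def fsol (m n : ℕ) (s : MvPolynomial (Fin n) ℂ) :
    MvPolynomial (Fin m × Fin n × Fin n) ℂ :=
  bind₁ (fun i : Fin n => (-1 : MvPolynomial (Fin m × Fin n × Fin n) ℂ) ^ ((i : ℕ) + 1)
    * (CPm m n).coeff (n - ((i : ℕ) + 1))) s

lemma fsol_eval (s : MvPolynomial (Fin n) ℂ) (x : Fin m → Matrix (Fin n) (Fin n) ℂ) :
    evalRep m n (fsol m n s) x
      = eval (fun i : Fin n => (-1 : ℂ) ^ ((i : ℕ) + 1)
          * ((prodX m x).charpoly).coeff (n - ((i : ℕ) + 1))) s := by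
  rw [evalRep, fsol, eval_bind]
  have hfun : (fun i : Fin n => eval (fun p : Fin m × Fin n × Fin n => x p.1 p.2.1 p.2.2)
      ((-1 : MvPolynomial (Fin m × Fin n × Fin n) ℂ) ^ ((i : ℕ) + 1)
        * (CPm m n).coeff (n - ((i : ℕ) + 1))))
      = fun i : Fin n => (-1 : ℂ) ^ ((i : ℕ) + 1)
          * ((prodX m x).charpoly).coeff (n - ((i : ℕ) + 1)) := by
    funext i
    rw [map_mul, map_pow, map_neg, map_one, CPm_coeff_eval]
  rw [hfun]

lemma fsol_GInv (s : MvPolynomial (Fin n) ℂ) : GInvRep m n (fsol m n s) := by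
  intro g x
  rw [fsol_eval, fsol_eval]
  have h1 : prodX m (fun i => (g (i + 1))⁻¹.val * x i * (g i).val)
      = ((g 0)⁻¹).val * prodX m x * (g 0).val := prodX_gauge g x
  have h2 : (((g 0)⁻¹).val * prodX m x * (g 0).val).charpoly = (prodX m x).charpoly := by
    have h3 : ((g 0)⁻¹).val * prodX m x * (g 0).val
        = ((g 0)⁻¹ : (Matrix (Fin n) (Fin n) ℂ)ˣ).val * prodX m x
          * (↑((g 0)⁻¹)⁻¹ : Matrix (Fin n) (Fin n) ℂ) := by
      rw [inv_inv]
    rw [h3]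
    exact charpoly_units_conj ((g 0)⁻¹) (prodX m x)
  rw [h1, h2]

lemma fsol_diag (q : MvPolynomial (Fin n) ℂ) (hq : WInvDiag m n q)
    (r : MvPolynomial (Fin n) ℂ) (hr : powm m n r = q)
    (s : MvPolynomial (Fin n) ℂ)
    (hs : aeval (fun i : Fin n => esymm (Fin n) ℂ ((i : ℕ) + 1)) s = r)
    (z : Fin n → ℂ) :
    evalRep m n (fsol m n s) (fun _ => Matrix.diagonal z) = eval z q := by
  rw [fsol_eval]
  set v : Fin n → ℂ := fun i => z i ^ m with hv
  have h1 : prodX m (fun _ : Fin m => Matrix.diagonal z) = Matrix.diagonal v :=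
    prodX_diagonal m z
  have h2 : (Matrix.diagonal v).charpoly
      = ∏ i : Fin n, (Polynomial.X - Polynomial.C (v i)) := by
    rw [Matrix.charpoly_of_upperTriangular _ (Matrix.blockTriangular_diagonal v)]
    apply Finset.prod_congr rfl
    intro i _
    rw [Matrix.diagonal_apply_eq]
  have h3 : (fun i : Fin n => (-1 : ℂ) ^ ((i : ℕ) + 1)
      * ((prodX m (fun _ : Fin m => Matrix.diagonal z)).charpoly).coeff (n - ((i : ℕ) + 1)))
      = fun i : Fin n => eval v (esymm (Fin n) ℂ ((i : ℕ) + 1)) := by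
    funext i
    rw [h1, h2, vieta_coeff v (by omega : (i : ℕ) + 1 ≤ n), ← mul_assoc, ← mul_pow,
      neg_mul_neg, one_mul, one_pow, one_mul]
  rw [h3]
  have h4 : eval (fun i : Fin n => eval v (esymm (Fin n) ℂ ((i : ℕ) + 1))) s = eval v r := by
    rw [← hs, aeval_eq_bind₁, eval_bind]
  rw [h4, ← hr, eval_powm]

end surj

lemma part1 (m n : ℕ) [NeZero m] (f : MvPolynomial (Fin m × Fin n × Fin n) ℂ)
    (hf : GInvRep m n f) (σ : Equiv.Perm (Fin n)) (a : Fin n → ℂ) (ha : ∀ i, a i ^ m = 1)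
    (z : Fin n → ℂ) :
    evalRep m n f (fun _ => Matrix.diagonal (fun i => a i * z (σ⁻¹ i))) =
      evalRep m n f (fun _ => Matrix.diagonal z) := by
  have ha0 : ∀ i, a i ≠ 0 := by
    intro i h
    have := ha i
    rw [h, zero_pow (NeZero.ne m)] at this
    exact one_ne_zero this.symm
  have hpow : ∀ l k, (a l) ^ (k % m) = (a l) ^ k := by
    intro l k
    conv_rhs => rw [← Nat.div_add_mod k m, pow_add, pow_mul, ha, one_pow, one_mul]
  set M : Fin m → Matrix (Fin n) (Fin n) ℂ :=
    fun i => Matrix.of fun k l => if k = σ⁻¹ l then ((a l)⁻¹) ^ (i : ℕ) else 0 with hM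
  set N : Fin m → Matrix (Fin n) (Fin n) ℂ :=
    fun i => Matrix.of fun k l => if k = σ l then (a (σ l)) ^ (i : ℕ) else 0 with hN
  have hMN : ∀ i, M i * N i = 1 := by
    intro i
    ext k l
    rw [Matrix.mul_apply, Finset.sum_eq_single (σ l)]
    · simp only [hM, hN, Matrix.of_apply, Equiv.Perm.coe_inv, Equiv.symm_apply_apply, if_true, eq_self_iff_true]
      by_cases h : k = l
      · subst h
        rw [if_pos rfl, Matrix.one_apply_eq, inv_pow]
        exact inv_mul_cancel₀ (pow_ne_zero _ (ha0 (σ k)))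
      · rw [if_neg h, zero_mul, Matrix.one_apply_ne h]
    · intro j _ hj
      simp [hN, Matrix.of_apply, if_neg hj]
    · simp
  have hNM : ∀ i, N i * M i = 1 := by
    intro i
    ext k l
    rw [Matrix.mul_apply, Finset.sum_eq_single (σ⁻¹ l)]
    · simp only [hM, hN, Matrix.of_apply, Equiv.Perm.coe_inv, Equiv.apply_symm_apply, if_true, eq_self_iff_true]
      by_cases h : k = l
      · subst h
        rw [if_pos rfl, Matrix.one_apply_eq, inv_pow]
        exact mul_inv_cancel₀ (pow_ne_zero _ (ha0 k))
      · rw [if_neg h, zero_mul, Matrix.one_apply_ne h]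
    · intro j _ hj
      simp [hM, Matrix.of_apply, if_neg hj]
      exact fun h => absurd h hj
    · simp
  set g : Fin m → (Matrix (Fin n) (Fin n) ℂ)ˣ := fun i => ⟨M i, N i, hMN i, hNM i⟩ with hg
  have key : ∀ i : Fin m, N (i + 1) * Matrix.diagonal z * M i
      = Matrix.diagonal (fun k => a k * z (σ⁻¹ k)) := by
    intro i
    have keyfact : ∀ l, (a l) ^ ((i + 1 : Fin m) : ℕ) * ((a l)⁻¹) ^ (i : ℕ) = a l := by
      intro l
      rw [fin_add_one_val, hpow, pow_succ, inv_pow, mul_comm ((a l) ^ (i:ℕ)), mul_assoc,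
        mul_inv_cancel₀ (pow_ne_zero _ (ha0 l)), mul_one]
    ext k l
    rw [Matrix.mul_apply]
    rw [Finset.sum_eq_single (σ⁻¹ l)]
    · rw [Matrix.mul_diagonal]
      simp only [hM, hN, Matrix.of_apply, Equiv.Perm.coe_inv, Equiv.apply_symm_apply, if_true, eq_self_iff_true]
      by_cases h : k = l
      · subst h
        rw [if_pos rfl, Matrix.diagonal_apply_eq, mul_right_comm, keyfact]
      · rw [if_neg h, Matrix.diagonal_apply_ne _ h, zero_mul, zero_mul]
    · intro j _ hj
      simp [hM, Matrix.of_apply, if_neg hj]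
      exact fun h => absurd h hj
    · simp
  have := hf g (fun _ => Matrix.diagonal z)
  have htuple : (fun i => (g (i + 1))⁻¹.val * Matrix.diagonal z * (g i).val)
      = fun _ : Fin m => Matrix.diagonal (fun k => a k * z (σ⁻¹ k)) := by
    funext i
    exact key i
  rw [htuple] at this
  exact this

/-- **Chevalley restriction for the cyclic quiver.**  Restriction of
functions from `R_n = (gl_n ℂ)^m` to the diagonal locus `L_n ≅ ℂ^n` is a bijection
between `G_n`-invariant polynomial functions and `W_n`-invariant polynomial functions:
it is well defined (restrictions of invariants are `W_n`-invariant), surjective, and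
injective. -/
theorem stmt_5 (m n : ℕ) [NeZero m] :
    (∀ f : MvPolynomial (Fin m × Fin n × Fin n) ℂ, GInvRep m n f →
      ∀ (σ : Equiv.Perm (Fin n)) (a : Fin n → ℂ), (∀ i, a i ^ m = 1) →
        ∀ z : Fin n → ℂ,
          evalRep m n f (fun _ => Matrix.diagonal (fun i => a i * z (σ⁻¹ i))) =
            evalRep m n f (fun _ => Matrix.diagonal z)) ∧
    (∀ q : MvPolynomial (Fin n) ℂ, WInvDiag m n q →
      ∃ f : MvPolynomial (Fin m × Fin n × Fin n) ℂ, GInvRep m n f ∧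
        ∀ z : Fin n → ℂ, evalRep m n f (fun _ => Matrix.diagonal z) = eval z q) ∧
    (∀ f f' : MvPolynomial (Fin m × Fin n × Fin n) ℂ, GInvRep m n f → GInvRep m n f' →
      (∀ z : Fin n → ℂ,
        evalRep m n f (fun _ => Matrix.diagonal z) =
          evalRep m n f' (fun _ => Matrix.diagonal z)) →
      ∀ x : Fin m → Matrix (Fin n) (Fin n) ℂ, evalRep m n f x = evalRep m n f' x) := by
  refine ⟨?_, ?_, ?_⟩
  · intro f hf σ a ha z
    exact part1 m n f hf σ a ha z
  · intro q hq
    obtain ⟨r, hr⟩ := exists_preimage_powm m n q hq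
    have hrsym := r_symmetric m n q hq r hr
    obtain ⟨s, hs⟩ := (esymmAlgHom_fin_bijective ℂ n).2 ⟨r, hrsym⟩
    have hs' : aeval (fun i : Fin n => esymm (Fin n) ℂ ((i : ℕ) + 1)) s = r := by
      have h1 := congrArg Subtype.val hs
      rw [esymmAlgHom_apply] at h1
      exact h1
    exact ⟨fsol m n s, fsol_GInv m n s, fun z => fsol_diag m n q hq r hr s hs' z⟩
  · intro f f' hf hf' hd x
    exact part3 f f' hf hf' hd x
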